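/- arXiv:1812.00248 — 3 statements merged into one kernel-verified Lean document; each statement's English description precedes it below -/
import Mathlib

section
/- A complex-valued vertex potential φ minimizes the Neumann power functional P_ξ(φ) = Σ_{e ∈ E^0} |φ(e^+) - φ(e^-)|^2/(2 l_e) - Σ_{e ∈ E^∞} Re(ξ(e)·conj(φ(e^-))) if and only if the induced global current, defined by ξ̃(e) = (φ(e^+) - φ(e^-))/l_e on bounded edges and by ξ on legs, is balanced at every vertex: Σ_{e: v = e^-} ξ̃(e) = Σ_{e: v = e^+} ξ̃(e). -/
open Finset Complex

private lemma regroup {E V : Type*} [Fintype E] [Fintype V] [DecidableEq V]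
    (key : E → V) (g : E → ℂ) (δ : V → ℂ) :
    ∑ e, (g e * (starRingEnd ℂ) (δ (key e))).re =
      ∑ v, ((∑ e ∈ Finset.univ.filter (fun e => key e = v), g e)
        * (starRingEnd ℂ) (δ v)).re := by
  rw [← Finset.sum_fiberwise Finset.univ key
      (fun e => (g e * (starRingEnd ℂ) (δ (key e))).re)]
  refine Finset.sum_congr rfl fun v _ => ?_
  rw [Finset.sum_mul, Complex.re_sum]
  refine Finset.sum_congr rfl fun e he => ?_
  rw [Finset.mem_filter] at he
  rw [he.2]

/-- A potential `φ` minimizes the Neumann power functional iff the induced global current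
is balanced at every vertex. -/
theorem neumann_minimizer_iff_balanced
    {V E₀ Einf : Type*} [Fintype V] [Fintype E₀] [Fintype Einf] [DecidableEq V]
    (src tgt : E₀ → V) (l : E₀ → ℝ) (hl : ∀ e, 0 < l e)
    (ep : Einf → V) (ξ : Einf → ℂ)
    (P : (V → ℂ) → ℝ)
    (hP : ∀ φ, P φ =
      (∑ e, ‖φ (tgt e) - φ (src e)‖ ^ 2 / (2 * l e)) -
        ∑ e, (ξ e * (starRingEnd ℂ) (φ (ep e))).re)
    (φ : V → ℂ) :
    (∀ ψ, P φ ≤ P ψ) ↔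
      (∀ v : V,
        (∑ e ∈ Finset.univ.filter (fun e => src e = v),
            (φ (tgt e) - φ (src e)) / (l e : ℂ)) +
          ∑ e ∈ Finset.univ.filter (fun e => ep e = v), ξ e =
        ∑ e ∈ Finset.univ.filter (fun e => tgt e = v),
            (φ (tgt e) - φ (src e)) / (l e : ℂ)) := by
  classical
  set c : V → ℂ := fun v =>
    (∑ e ∈ Finset.univ.filter (fun e => tgt e = v), (φ (tgt e) - φ (src e)) / (l e : ℂ))
    - (∑ e ∈ Finset.univ.filter (fun e => src e = v), (φ (tgt e) - φ (src e)) / (l e : ℂ))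
    - ∑ e ∈ Finset.univ.filter (fun e => ep e = v), ξ e with hc
  have hbal : (∀ v : V,
        (∑ e ∈ Finset.univ.filter (fun e => src e = v),
            (φ (tgt e) - φ (src e)) / (l e : ℂ)) +
          ∑ e ∈ Finset.univ.filter (fun e => ep e = v), ξ e =
        ∑ e ∈ Finset.univ.filter (fun e => tgt e = v),
            (φ (tgt e) - φ (src e)) / (l e : ℂ)) ↔ ∀ v, c v = 0 := by
    constructor
    · intro h v
      have hv := h v
      simp only [hc]
      rw [sub_sub, sub_eq_zero, ← hv]
    · intro h v
      have hv := h v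
      simp only [hc] at hv
      rw [sub_sub, sub_eq_zero] at hv
      rw [← hv]
  rw [hbal]
  -- key expansion lemma
  have hexp : ∀ δ : V → ℂ, P (fun w => φ w + δ w) =
      P φ + (∑ v, (c v * (starRingEnd ℂ) (δ v)).re)
        + ∑ e, ‖δ (tgt e) - δ (src e)‖ ^ 2 / (2 * l e) := by
    intro δ
    have habs : ∀ z : ℂ, ‖z‖ ^ 2 = Complex.normSq z := fun z => Complex.sq_norm z
    have h1 : ∀ e : E₀,
        ‖(φ (tgt e) + δ (tgt e)) - (φ (src e) + δ (src e))‖ ^ 2 / (2 * l e)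
        = ‖φ (tgt e) - φ (src e)‖ ^ 2 / (2 * l e)
          + (((φ (tgt e) - φ (src e)) / (l e : ℂ)) * (starRingEnd ℂ) (δ (tgt e))).re
          - (((φ (tgt e) - φ (src e)) / (l e : ℂ)) * (starRingEnd ℂ) (δ (src e))).re
          + ‖δ (tgt e) - δ (src e)‖ ^ 2 / (2 * l e) := by
      intro e
      have hle := hl e
      have hlne : (l e : ℂ) ≠ 0 := by exact_mod_cast (ne_of_gt hle)
      have hre : (((φ (tgt e) - φ (src e)) / (l e : ℂ)) * (starRingEnd ℂ) (δ (tgt e))).re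
          - (((φ (tgt e) - φ (src e)) / (l e : ℂ)) * (starRingEnd ℂ) (δ (src e))).re
          = ((φ (tgt e) - φ (src e)) * (starRingEnd ℂ) (δ (tgt e) - δ (src e))).re / l e := by
        have hz : ((φ (tgt e) - φ (src e)) / (l e : ℂ)) * (starRingEnd ℂ) (δ (tgt e))
            - ((φ (tgt e) - φ (src e)) / (l e : ℂ)) * (starRingEnd ℂ) (δ (src e))
            = ((φ (tgt e) - φ (src e)) * (starRingEnd ℂ) (δ (tgt e) - δ (src e))) / (l e : ℂ) := by
          field_simp
          rw [map_sub]
        rw [← Complex.sub_re, hz, Complex.div_ofReal_re]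
      have hsplit : (φ (tgt e) + δ (tgt e)) - (φ (src e) + δ (src e))
          = (φ (tgt e) - φ (src e)) + (δ (tgt e) - δ (src e)) := by ring
      have hnormSq : Complex.normSq ((φ (tgt e) - φ (src e)) + (δ (tgt e) - δ (src e)))
          = Complex.normSq (φ (tgt e) - φ (src e))
            + 2 * ((φ (tgt e) - φ (src e)) * (starRingEnd ℂ) (δ (tgt e) - δ (src e))).re
            + Complex.normSq (δ (tgt e) - δ (src e)) := by
        simp only [Complex.normSq_apply, Complex.add_re, Complex.add_im, Complex.mul_re,
          Complex.conj_re, Complex.conj_im]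
        ring
      calc ‖(φ (tgt e) + δ (tgt e)) - (φ (src e) + δ (src e))‖ ^ 2 / (2 * l e)
          = ‖φ (tgt e) - φ (src e)‖ ^ 2 / (2 * l e)
            + ((φ (tgt e) - φ (src e)) * (starRingEnd ℂ) (δ (tgt e) - δ (src e))).re / l e
            + ‖δ (tgt e) - δ (src e)‖ ^ 2 / (2 * l e) := by
            rw [hsplit, habs, habs, habs, hnormSq]
            field_simp
        _ = _ := by rw [← hre]; ring
    have h2 : ∀ e : Einf,
        (ξ e * (starRingEnd ℂ) (φ (ep e) + δ (ep e))).re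
        = (ξ e * (starRingEnd ℂ) (φ (ep e))).re + (ξ e * (starRingEnd ℂ) (δ (ep e))).re := by
      intro e
      rw [map_add, mul_add, Complex.add_re]
    rw [hP, hP]
    simp only [h1, h2]
    rw [Finset.sum_add_distrib, Finset.sum_add_distrib, Finset.sum_sub_distrib,
      Finset.sum_add_distrib]
    have hg1 := regroup tgt (fun e => (φ (tgt e) - φ (src e)) / (l e : ℂ)) δ
    have hg2 := regroup src (fun e => (φ (tgt e) - φ (src e)) / (l e : ℂ)) δ
    have hg3 := regroup ep ξ δ
    have hcsum : ∑ v, (c v * (starRingEnd ℂ) (δ v)).re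
        = (∑ e, (((φ (tgt e) - φ (src e)) / (l e : ℂ)) * (starRingEnd ℂ) (δ (tgt e))).re)
          - (∑ e, (((φ (tgt e) - φ (src e)) / (l e : ℂ)) * (starRingEnd ℂ) (δ (src e))).re)
          - ∑ e, (ξ e * (starRingEnd ℂ) (δ (ep e))).re := by
      rw [hg1, hg2, hg3, ← Finset.sum_sub_distrib, ← Finset.sum_sub_distrib]
      refine Finset.sum_congr rfl fun v _ => ?_
      simp only [hc, sub_mul, Complex.sub_re]
    rw [hcsum]
    ring
  constructor
  · -- minimizer → balanced
    intro hmin v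
    set N : ℝ := Complex.normSq (c v) with hN
    set δ₀ : V → ℂ := fun w => if w = v then c v else 0 with hδ₀
    set q : ℝ := ∑ e, ‖δ₀ (tgt e) - δ₀ (src e)‖ ^ 2 / (2 * l e) with hq
    have hq0 : 0 ≤ q := by
      apply Finset.sum_nonneg
      intro e _
      apply div_nonneg
      · positivity
      · have := hl e; linarith
    have key : ∀ t : ℝ, 0 ≤ t * N + t ^ 2 * q := by
      intro t
      have hm := hmin (fun w => φ w + (t : ℂ) * δ₀ w)
      rw [hexp (fun w => (t : ℂ) * δ₀ w)] at hm
      have hlin : ∑ w, (c w * (starRingEnd ℂ) ((t : ℂ) * δ₀ w)).re = t * N := by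
        rw [Finset.sum_eq_single v]
        · simp [hδ₀, Complex.mul_re, Complex.normSq_apply, hN, Complex.conj_re,
            Complex.conj_im, Complex.ofReal_re, Complex.ofReal_im]
          ring
        · intro w _ hw
          simp [hδ₀, hw]
        · simp
      have hquad : ∑ e, ‖(t : ℂ) * δ₀ (tgt e) - (t : ℂ) * δ₀ (src e)‖ ^ 2 / (2 * l e)
          = t ^ 2 * q := by
        rw [hq, Finset.mul_sum]
        refine Finset.sum_congr rfl fun e _ => ?_
        rw [← mul_sub, norm_mul, mul_pow]
        have ht : ‖(t : ℂ)‖ ^ 2 = t ^ 2 := by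
          rw [Complex.norm_real, Real.norm_eq_abs, _root_.sq_abs]
        rw [ht]
        ring
      rw [hlin, hquad] at hm
      linarith
    have hN0 : 0 ≤ N := Complex.normSq_nonneg _
    have hqp : (0:ℝ) < q + 1 := by linarith
    have key' := key (-(N / (q + 1)))
    have h3 : (-(N / (q + 1)) * N + (-(N / (q + 1))) ^ 2 * q) * (q + 1) ^ 2 = -N ^ 2 := by
      field_simp
      ring
    have h2 : 0 ≤ (-(N / (q + 1)) * N + (-(N / (q + 1))) ^ 2 * q) * (q + 1) ^ 2 :=
      mul_nonneg key' (by positivity)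
    rw [h3] at h2
    have hNsq : N ^ 2 = 0 := le_antisymm (by linarith) (sq_nonneg N)
    have hNzero : N = 0 := by
      nlinarith [sq_nonneg N]
    exact Complex.normSq_eq_zero.mp hNzero
  · -- balanced → minimizer
    intro hbal0 ψ
    have hx := hexp (fun w => ψ w - φ w)
    have hψ : (fun w => φ w + (ψ w - φ w)) = ψ := by
      funext w; ring
    rw [hψ] at hx
    rw [hx]
    have h1 : ∑ v, (c v * (starRingEnd ℂ) (ψ v - φ v)).re = 0 := by
      apply Finset.sum_eq_zero
      intro v _
      rw [hbal0 v, zero_mul, Complex.zero_re]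
    rw [h1]
    have h2 : 0 ≤ ∑ e, ‖ψ (tgt e) - φ (tgt e) - (ψ (src e) - φ (src e))‖ ^ 2
        / (2 * l e) := by
      apply Finset.sum_nonneg
      intro e _
      apply div_nonneg
      · positivity
      · have := hl e; linarith
    linarith
end

section
/- Let A be an abelian group equipped with an antisymmetric biadditive real-valued pairing α × β, and let ℏ be such that sin(πℏ/2) ≠ 0. Then the bracket [L_α, L_β] = [α×β]_ℏ · L_{α+β} on the free complex vector space with basis {L_α}_{α∈A} is antisymmetric and satisfies the Jacobi identity, hence defines a Lie algebra structure. -/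
open Finsupp in
/-- The quantum-tori bracket `[L_α, L_β] = [α×β]_ℏ · L_{α+β}` on the free complex vector
space with basis `{L_α}_{α ∈ A}` is antisymmetric and satisfies the Jacobi identity. -/
theorem quantum_torus_bracket_lie
    {A : Type*} [AddCommGroup A] [DecidableEq A]
    (ω : A → A → ℝ)
    (hanti : ∀ α β, ω β α = -ω α β)
    (haddl : ∀ α β γ, ω (α + β) γ = ω α γ + ω β γ)
    (haddr : ∀ α β γ, ω α (β + γ) = ω α β + ω α γ)
    (ℏ : ℂ) (h : Complex.sin (Real.pi * ℏ / 2) ≠ 0)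
    (q : ℝ → ℂ)
    (hq : ∀ x : ℝ, q x = Complex.sin (Real.pi * ℏ * x / 2) / Complex.sin (Real.pi * ℏ / 2))
    (br : (A →₀ ℂ) → (A →₀ ℂ) → (A →₀ ℂ))
    (hbr : ∀ f g, br f g =
      f.sum fun α a => g.sum fun β b => (a * b * q (ω α β)) • Finsupp.single (α + β) (1 : ℂ)) :
    (∀ f g, br f g = -br g f) ∧
      (∀ f g k, br (br f g) k + br (br g k) f + br (br k f) g = 0) := by
  -- q is odd
  have hqneg : ∀ x : ℝ, q (-x) = - q x := by
    intro x
    rw [hq, hq]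
    have e : Real.pi * ℏ * (↑(-x)) / 2 = -(Real.pi * ℏ * x / 2) := by push_cast; ring
    rw [e, Complex.sin_neg, neg_div]
  -- key trig identity
  have key : ∀ X Y Z : ℂ, Complex.sin X * Complex.sin (Y - Z)
      + Complex.sin Y * Complex.sin (Z - X) + Complex.sin Z * Complex.sin (X - Y) = 0 := by
    intro X Y Z
    simp only [Complex.sin_sub]
    ring
  -- q identity
  have hqkey : ∀ x y z : ℝ, q x * q (-z + y) + q y * q (-x + z) + q z * q (-y + x) = 0 := by
    intro x y z
    rw [hq, hq, hq, hq, hq, hq]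
    have e1 : Real.pi * ℏ * (↑(-z + y)) / 2 = Real.pi * ℏ * y / 2 - Real.pi * ℏ * z / 2 := by
      push_cast; ring
    have e2 : Real.pi * ℏ * (↑(-x + z)) / 2 = Real.pi * ℏ * z / 2 - Real.pi * ℏ * x / 2 := by
      push_cast; ring
    have e3 : Real.pi * ℏ * (↑(-y + x)) / 2 = Real.pi * ℏ * x / 2 - Real.pi * ℏ * y / 2 := by
      push_cast; ring
    rw [e1, e2, e3, div_mul_div_comm, div_mul_div_comm, div_mul_div_comm,
      ← add_div, ← add_div,
      key (Real.pi * ℏ * ↑x / 2) (Real.pi * ℏ * ↑y / 2) (Real.pi * ℏ * ↑z / 2), zero_div]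
  -- basic structural lemmas
  have l0 : ∀ g, br 0 g = 0 := by
    intro g; rw [hbr]; exact Finsupp.sum_zero_index
  have r0 : ∀ f, br f 0 = 0 := by
    intro f; rw [hbr]; simp [Finsupp.sum_zero_index]
  have ladd : ∀ f1 f2 g, br (f1 + f2) g = br f1 g + br f2 g := by
    intro f1 f2 g
    rw [hbr, hbr, hbr]
    apply Finsupp.sum_add_index
    · intro α _
      simp
    · intro α _ a1 a2
      rw [← Finsupp.sum_add]
      congr 1; ext β b
      rw [← add_smul]; ring_nf
  have radd : ∀ f g1 g2, br f (g1 + g2) = br f g1 + br f g2 := by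
    intro f g1 g2
    rw [hbr, hbr, hbr, ← Finsupp.sum_add]
    refine Finsupp.sum_congr fun α _ => ?_
    apply Finsupp.sum_add_index
    · intro β _
      simp
    · intro β _ b1 b2
      rw [← add_smul]; ring_nf
  have ss : ∀ (α β : A) (a b : ℂ),
      br (Finsupp.single α a) (Finsupp.single β b)
        = Finsupp.single (α + β) (a * b * q (ω α β)) := by
    intro α β a b
    rw [hbr, Finsupp.sum_single_index, Finsupp.sum_single_index]
    · rw [Finsupp.smul_single, smul_eq_mul, mul_one]
    · simp
    · simp [Finsupp.sum_zero_index]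
  constructor
  · intro f g
    induction f using Finsupp.induction_linear with
    | zero => simp [l0, r0]
    | add f1 f2 h1 h2 => rw [ladd, h1, h2, radd]; abel
    | single α a =>
      induction g using Finsupp.induction_linear with
      | zero => simp [l0, r0]
      | add g1 g2 h1 h2 => rw [radd, h1, h2, ladd]; abel
      | single β b =>
        rw [ss, ss, hanti β α, hqneg, add_comm β α, ← Finsupp.single_neg]
        ring_nf
  · intro f g k
    induction f using Finsupp.induction_linear with
    | zero => simp [l0, r0]
    | add f1 f2 h1 h2 =>
      rw [ladd f1 f2 g, ladd (br f1 g) (br f2 g) k, radd (br g k) f1 f2,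
        radd k f1 f2, ladd (br k f1) (br k f2) g]
      linear_combination (norm := abel) h1 + h2
    | single α a =>
      induction g using Finsupp.induction_linear with
      | zero => simp [l0, r0]
      | add g1 g2 h1 h2 =>
        rw [radd (Finsupp.single α a) g1 g2, ladd (br (Finsupp.single α a) g1) (br (Finsupp.single α a) g2) k,
          ladd g1 g2 k, ladd (br g1 k) (br g2 k) (Finsupp.single α a),
          radd (br k (Finsupp.single α a)) g1 g2]
        linear_combination (norm := abel) h1 + h2
      | single β b =>
        induction k using Finsupp.induction_linear with
        | zero => simp [l0, r0]
        | add k1 k2 h1 h2 =>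
          rw [radd (br (Finsupp.single α a) (Finsupp.single β b)) k1 k2,
            radd (Finsupp.single β b) k1 k2,
            ladd (br (Finsupp.single β b) k1) (br (Finsupp.single β b) k2) (Finsupp.single α a),
            ladd k1 k2 (Finsupp.single α a),
            ladd (br k1 (Finsupp.single α a)) (br k2 (Finsupp.single α a)) (Finsupp.single β b)]
          linear_combination (norm := abel) h1 + h2
        | single γ c =>
          rw [ss, ss, ss, ss, ss, ss]
          have i1 : β + γ + α = α + β + γ := by abel
          have i2 : γ + α + β = α + β + γ := by abel
          rw [i1, i2, ← Finsupp.single_add, ← Finsupp.single_add]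
          rw [haddl α β γ, haddl β γ α, haddl γ α β,
            hanti γ α, hanti α β, hanti β γ]
          have hcoef : a * b * q (ω α β) * c * q (-ω γ α + ω β γ)
              + b * c * q (ω β γ) * a * q (-ω α β + ω γ α)
              + c * a * q (ω γ α) * b * q (-ω β γ + ω α β) = 0 := by
            linear_combination a * b * c * hqkey (ω α β) (ω β γ) (ω γ α)
          rw [hcoef, Finsupp.single_zero]
end

section
/- Let A, B be compact convex sets in ℝ^2 and define the mixed area Area(A,B) = (Area(A ⊞ B) - Area(A) - Area(B))/2, where A ⊞ B = {a + b : a ∈ A, b ∈ B} is the Minkowski sum. Then Area(A,B) ≥ (Area(A)·Area(B))^{1/2} (Minkowski's first inequality in the plane). -/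
open MeasureTheory Set Pointwise

/-- Volume of a bounded nonempty convex subset of ℝ. -/
lemma conv1d_vol {s : Set ℝ} (hc : Convex ℝ s) (hne : s.Nonempty)
    (hb : BddBelow s) (ha : BddAbove s) :
    volume s = ENNReal.ofReal (sSup s - sInf s) := by
  have h2 : s ⊆ Set.Icc (sInf s) (sSup s) := fun x hx => ⟨csInf_le hb hx, le_csSup ha hx⟩
  have h1 : Set.Ioo (sInf s) (sSup s) ⊆ s := by
    intro x hx
    obtain ⟨a, has, hax⟩ := exists_lt_of_csInf_lt hne hx.1
    obtain ⟨b, hbs, hxb⟩ := exists_lt_of_lt_csSup hne hx.2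
    exact hc.ordConnected.out has hbs ⟨hax.le, hxb.le⟩
  refine le_antisymm ?_ ?_
  · exact (measure_mono h2).trans_eq Real.volume_Icc
  · exact Real.volume_Ioo ▸ measure_mono h1

lemma sSup_set_add {s t : Set ℝ} (hsne : s.Nonempty) (htne : t.Nonempty)
    (hs : BddAbove s) (ht : BddAbove t) : sSup (s + t) = sSup s + sSup t := by
  apply le_antisymm
  · refine csSup_le (hsne.add htne) ?_
    rintro x ⟨a, ha, b, hb, rfl⟩
    exact add_le_add (le_csSup hs ha) (le_csSup ht hb)
  · have : ∀ b ∈ t, sSup s + b ≤ sSup (s + t) := by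
      intro b hb
      have : sSup s ≤ sSup (s + t) - b := by
        refine csSup_le hsne fun a ha => ?_
        have : a + b ≤ sSup (s + t) := le_csSup (hs.add ht) ⟨a, ha, b, hb, rfl⟩
        linarith
      linarith
    have h := csSup_le htne (fun b hb => by have := this b hb; linarith : ∀ b ∈ t, b ≤ sSup (s+t) - sSup s)
    linarith

lemma sInf_set_add {s t : Set ℝ} (hsne : s.Nonempty) (htne : t.Nonempty)
    (hs : BddBelow s) (ht : BddBelow t) : sInf (s + t) = sInf s + sInf t := by
  apply le_antisymm
  · have : ∀ b ∈ t, sInf (s + t) ≤ sInf s + b := by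
      intro b hb
      have : sInf (s + t) - b ≤ sInf s := by
        refine le_csInf hsne fun a ha => ?_
        have : sInf (s + t) ≤ a + b := csInf_le (hs.add ht) ⟨a, ha, b, hb, rfl⟩
        linarith
      linarith
    have h := le_csInf htne (fun b hb => by have := this b hb; linarith : ∀ b ∈ t, sInf (s+t) - sInf s ≤ b)
    linarith
  · refine le_csInf (hsne.add htne) ?_
    rintro x ⟨a, ha, b, hb, rfl⟩
    exact add_le_add (csInf_le hs ha) (csInf_le ht hb)

/-- 1-dimensional Brunn–Minkowski for bounded convex sets. -/
lemma bm1d {s t : Set ℝ} (hsc : Convex ℝ s) (htc : Convex ℝ t)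
    (hsne : s.Nonempty) (htne : t.Nonempty)
    (hsb : BddBelow s) (hsa : BddAbove s) (htb : BddBelow t) (hta : BddAbove t) :
    volume s + volume t ≤ volume (s + t) := by
  rw [conv1d_vol hsc hsne hsb hsa, conv1d_vol htc htne htb hta,
    conv1d_vol (hsc.add htc) (hsne.add htne) (hsb.add htb) (hsa.add hta),
    sSup_set_add hsne htne hsa hta, sInf_set_add hsne htne hsb htb,
    ← ENNReal.ofReal_add (by have := csInf_le_csSup hsne hsb hsa; linarith)
      (by have := csInf_le_csSup htne htb hta; linarith)]
  apply le_of_eq; ring_nf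

lemma slice_convex {K : Set (ℝ × ℝ)} (hKc : Convex ℝ K) (x : ℝ) :
    Convex ℝ (Prod.mk x ⁻¹' K) := by
  intro a ha b hb p q hp hq hpq
  have h := hKc ha hb hp hq hpq
  have h2 : p • ((x : ℝ), a) + q • (x, b) = (x, p • a + q • b) := by
    simp only [Prod.smul_mk, Prod.mk_add_mk, smul_eq_mul, Prod.mk.injEq]
    exact ⟨by linear_combination x * hpq, trivial⟩
  rw [h2] at h
  exact h

noncomputable def sliceVol (K : Set (ℝ × ℝ)) (x : ℝ) : ℝ :=
  (volume (Prod.mk x ⁻¹' K)).toReal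

lemma slice_bounded {K : Set (ℝ × ℝ)} (hK : IsCompact K) (x : ℝ) :
    Bornology.IsBounded (Prod.mk x ⁻¹' K) :=
  ((hK.image continuous_snd).isBounded).subset (fun y hy => ⟨(x, y), hy, rfl⟩)

lemma slice_vol_lt_top {K : Set (ℝ × ℝ)} (hK : IsCompact K) (x : ℝ) :
    volume (Prod.mk x ⁻¹' K) < ⊤ :=
  (slice_bounded hK x).measure_lt_top

lemma vol_eq_lintegral_slice {K : Set (ℝ × ℝ)} (hK : IsCompact K) :
    volume K = ∫⁻ x, ENNReal.ofReal (sliceVol K x) := by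
  rw [show (volume : Measure (ℝ × ℝ)) = (volume : Measure ℝ).prod volume from
    Measure.volume_eq_prod ℝ ℝ, Measure.prod_apply hK.measurableSet]
  refine lintegral_congr fun x => ?_
  rw [sliceVol, ENNReal.ofReal_toReal (slice_vol_lt_top hK x).ne]

lemma sliceVol_measurable {K : Set (ℝ × ℝ)} (hK : IsCompact K) :
    Measurable (sliceVol K) :=
  (measurable_measure_prodMk_left hK.measurableSet).ennreal_toReal

lemma sliceVol_nonneg (K : Set (ℝ × ℝ)) (x : ℝ) : 0 ≤ sliceVol K x :=
  ENNReal.toReal_nonneg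

lemma slice_nonempty_of_pos {K : Set (ℝ × ℝ)} {x : ℝ} (h : 0 < sliceVol K x) :
    (Prod.mk x ⁻¹' K).Nonempty := by
  rw [Set.nonempty_iff_ne_empty]
  intro he
  rw [sliceVol, he] at h
  simp at h

lemma sliceVol_le {K : Set (ℝ × ℝ)} (hK : IsCompact K) (x : ℝ) :
    sliceVol K x ≤ (volume (Prod.snd '' K)).toReal :=
  ENNReal.toReal_mono ((hK.image continuous_snd).measure_lt_top).ne
    (measure_mono fun y hy => ⟨(x, y), hy, rfl⟩)

-- volume of scalar multiple in ℝ
lemma vol_smul_real {p : ℝ} (hp : 0 ≤ p) (s : Set ℝ) :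
    volume (p • s) = ENNReal.ofReal p * volume s := by
  rw [Measure.addHaar_smul]
  congr 1
  simp [Module.finrank_self, abs_of_nonneg hp]

lemma slice_concave {A : Set (ℝ × ℝ)} (hA : IsCompact A) (hAc : Convex ℝ A)
    {x1 x2 : ℝ} (h1 : (Prod.mk x1 ⁻¹' A).Nonempty) (h2 : (Prod.mk x2 ⁻¹' A).Nonempty)
    {p q : ℝ} (hp : 0 ≤ p) (hq : 0 ≤ q) (hpq : p + q = 1) :
    p * sliceVol A x1 + q * sliceVol A x2 ≤ sliceVol A (p * x1 + q * x2) := by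
  set s := Prod.mk x1 ⁻¹' A with hs
  set u := Prod.mk x2 ⁻¹' A with hu
  have hsub : p • s + q • u ⊆ Prod.mk (p * x1 + q * x2) ⁻¹' A := by
    rintro z ⟨a, ⟨a', ha', rfl⟩, b, ⟨b', hb', rfl⟩, rfl⟩
    have h := hAc ha' hb' hp hq hpq
    have h2 : p • ((x1 : ℝ), a') + q • (x2, b') = (p * x1 + q * x2, p • a' + q • b') := by
      simp only [Prod.smul_mk, Prod.mk_add_mk, smul_eq_mul]
    rw [h2] at h
    exact h
  rcases eq_or_lt_of_le hp with hp0 | hp0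
  · have hq1 : q = 1 := by linarith
    simp only [← hp0, hq1, zero_mul, one_mul, zero_add]
    exact le_refl _
  rcases eq_or_lt_of_le hq with hq0 | hq0
  · have hp1 : p = 1 := by linarith
    simp only [← hq0, hp1, zero_mul, one_mul, mul_zero, add_zero]
    exact le_refl _
  -- main case
  have hsb := slice_bounded hA x1
  have hub := slice_bounded hA x2
  have key : ENNReal.ofReal (p * sliceVol A x1 + q * sliceVol A x2)
      ≤ volume (Prod.mk (p * x1 + q * x2) ⁻¹' A) := by
    calc ENNReal.ofReal (p * sliceVol A x1 + q * sliceVol A x2)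
        = ENNReal.ofReal p * volume s + ENNReal.ofReal q * volume u := by
          rw [ENNReal.ofReal_add (mul_nonneg hp (sliceVol_nonneg A x1)) (mul_nonneg hq (sliceVol_nonneg A x2)),
            ENNReal.ofReal_mul hp, ENNReal.ofReal_mul hq, sliceVol, sliceVol,
            ENNReal.ofReal_toReal (slice_vol_lt_top hA x1).ne,
            ENNReal.ofReal_toReal (slice_vol_lt_top hA x2).ne]
      _ = volume (p • s) + volume (q • u) := by
          rw [vol_smul_real hp, vol_smul_real hq]
      _ ≤ volume (p • s + q • u) := by
          have hbs' := (hsb.smul₀ p)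
          have hbu' := (hub.smul₀ q)
          exact bm1d ((slice_convex hAc x1).smul p) ((slice_convex hAc x2).smul q)
            (h1.smul_set) (h2.smul_set)
            hbs'.bddBelow hbs'.bddAbove hbu'.bddBelow hbu'.bddAbove
      _ ≤ volume (Prod.mk (p * x1 + q * x2) ⁻¹' A) := measure_mono hsub
  rw [show sliceVol A (p * x1 + q * x2) = (volume (Prod.mk (p * x1 + q * x2) ⁻¹' A)).toReal from rfl,
    ← ENNReal.ofReal_le_iff_le_toReal (slice_vol_lt_top hA _).ne]
  exact key

lemma level_convex {A : Set (ℝ × ℝ)} (hA : IsCompact A) (hAc : Convex ℝ A)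
    {t : ℝ} (ht : 0 < t) : Convex ℝ {x | t ≤ sliceVol A x} := by
  intro x1 h1 x2 h2 p q hp hq hpq
  simp only [mem_setOf_eq, smul_eq_mul] at h1 h2 ⊢
  have hs1 := slice_nonempty_of_pos (lt_of_lt_of_le ht h1)
  have hs2 := slice_nonempty_of_pos (lt_of_lt_of_le ht h2)
  calc t = p * t + q * t := by linear_combination (-t) * hpq
    _ ≤ p * sliceVol A x1 + q * sliceVol A x2 := by
        exact add_le_add (mul_le_mul_of_nonneg_left h1 hp) (mul_le_mul_of_nonneg_left h2 hq)
    _ ≤ sliceVol A (p * x1 + q * x2) := slice_concave hA hAc hs1 hs2 hp hq hpq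

lemma level_bounded {A : Set (ℝ × ℝ)} (hA : IsCompact A) {t : ℝ} (ht : 0 < t) :
    Bornology.IsBounded {x | t ≤ sliceVol A x} := by
  refine ((hA.image continuous_fst).isBounded).subset fun x hx => ?_
  obtain ⟨y, hy⟩ := slice_nonempty_of_pos (lt_of_lt_of_le ht hx)
  exact ⟨(x, y), hy, rfl⟩

lemma level_add_subset {A B : Set (ℝ × ℝ)} (hA : IsCompact A) (hB : IsCompact B)
    (hAc : Convex ℝ A) (hBc : Convex ℝ B) {a b : ℝ} (ha : 0 < a) (hb : 0 < b) :
    {x | a ≤ sliceVol A x} + {y | b ≤ sliceVol B y} ⊆ {z | a + b ≤ sliceVol (A + B) z} := by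
  rintro z ⟨x, hx, y, hy, rfl⟩
  simp only [mem_setOf_eq] at hx hy ⊢
  have hs1 := slice_nonempty_of_pos (lt_of_lt_of_le ha hx)
  have hs2 := slice_nonempty_of_pos (lt_of_lt_of_le hb hy)
  have hsb := slice_bounded hA x
  have hub := slice_bounded hB y
  have hsub : (Prod.mk x ⁻¹' A) + (Prod.mk y ⁻¹' B) ⊆ Prod.mk (x + y) ⁻¹' (A + B) := by
    rintro z ⟨a', ha', b', hb', rfl⟩
    exact ⟨(x, a'), ha', (y, b'), hb', rfl⟩
  have key : ENNReal.ofReal (a + b) ≤ volume (Prod.mk (x + y) ⁻¹' (A + B)) := by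
    calc ENNReal.ofReal (a + b) = ENNReal.ofReal a + ENNReal.ofReal b :=
          ENNReal.ofReal_add ha.le hb.le
      _ ≤ volume (Prod.mk x ⁻¹' A) + volume (Prod.mk y ⁻¹' B) := by
          refine add_le_add ?_ ?_
          · rw [← ENNReal.ofReal_toReal (slice_vol_lt_top hA x).ne]
            exact ENNReal.ofReal_le_ofReal hx
          · rw [← ENNReal.ofReal_toReal (slice_vol_lt_top hB y).ne]
            exact ENNReal.ofReal_le_ofReal hy
      _ ≤ volume ((Prod.mk x ⁻¹' A) + (Prod.mk y ⁻¹' B)) :=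
          bm1d (slice_convex hAc x) (slice_convex hBc y) hs1 hs2
            hsb.bddBelow hsb.bddAbove hub.bddBelow hub.bddAbove
      _ ≤ _ := measure_mono hsub
  rw [show sliceVol (A + B) (x + y) = (volume (Prod.mk (x + y) ⁻¹' (A + B))).toReal from rfl,
    ← ENNReal.ofReal_le_iff_le_toReal (slice_vol_lt_top (hA.add hB) _).ne]
  exact key

lemma layer_scaled {A : Set (ℝ × ℝ)} (hA : IsCompact A) {c : ℝ} (hc : 0 < c) :
    ∫⁻ t in Ioi (0:ℝ), volume {x | c * t ≤ sliceVol A x}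
      = ENNReal.ofReal (1 / c) * volume A := by
  have hmeas : AEMeasurable (fun x => sliceVol A x / c) volume :=
    ((sliceVol_measurable hA).div_const c).aemeasurable
  have hnn : 0 ≤ᵐ[volume] fun x => sliceVol A x / c :=
    Filter.Eventually.of_forall fun x => div_nonneg (sliceVol_nonneg A x) hc.le
  have lc := lintegral_eq_lintegral_meas_le volume hnn hmeas
  have hsets : ∀ t : ℝ, {x | t ≤ sliceVol A x / c} = {x | c * t ≤ sliceVol A x} := by
    intro t; ext x; simp only [mem_setOf_eq, le_div_iff₀ hc, mul_comm]
  simp_rw [hsets] at lc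
  rw [← lc]
  calc ∫⁻ x, ENNReal.ofReal (sliceVol A x / c)
      = ∫⁻ x, ENNReal.ofReal (sliceVol A x) * ENNReal.ofReal (1 / c) := by
        refine lintegral_congr fun x => ?_
        rw [← ENNReal.ofReal_mul (sliceVol_nonneg A x)]
        congr 1; field_simp
    _ = (∫⁻ x, ENNReal.ofReal (sliceVol A x)) * ENNReal.ofReal (1 / c) :=
        lintegral_mul_const'' _ ((sliceVol_measurable hA).ennreal_ofReal.aemeasurable)
    _ = ENNReal.ofReal (1 / c) * volume A := by
        rw [← vol_eq_lintegral_slice hA, mul_comm]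

lemma sup_sliceVol_pos {A : Set (ℝ × ℝ)} (hA : IsCompact A)
    (hvA : 0 < (volume A).toReal) :
    0 < sSup (Set.range (sliceVol A)) ∧ BddAbove (Set.range (sliceVol A)) := by
  have hbdd : BddAbove (Set.range (sliceVol A)) := by
    refine ⟨(volume (Prod.snd '' A)).toReal, ?_⟩
    rintro _ ⟨x, rfl⟩
    exact sliceVol_le hA x
  refine ⟨?_, hbdd⟩
  by_contra hM
  push_neg at hM
  have hz : ∀ x, sliceVol A x = 0 := fun x =>
    le_antisymm ((le_csSup hbdd ⟨x, rfl⟩).trans hM) (sliceVol_nonneg A x)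
  have : volume A = 0 := by
    rw [vol_eq_lintegral_slice hA]
    simp [hz]
  rw [this] at hvA
  simp at hvA



lemma level_vol_antitone (K : Set (ℝ × ℝ)) {c : ℝ} (hc : 0 ≤ c) :
    Antitone fun t : ℝ => volume {x | c * t ≤ sliceVol K x} :=
  fun _ _ hab => measure_mono fun _ hx =>
    le_trans (mul_le_mul_of_nonneg_left hab hc) hx

lemma lint_Ioi_eq_Ioo {F : ℝ → ENNReal} {T : ℝ} (hT : 0 < T)
    (h0 : ∀ t ∈ Ioi T, F t = 0) :
    ∫⁻ t in Ioi (0:ℝ), F t = ∫⁻ t in Ioo (0:ℝ) T, F t := by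
  have hunion : Ioo (0:ℝ) T ∪ Ici T = Ioi 0 := Ioo_union_Ici_eq_Ioi hT
  have hdisj : Disjoint (Ioo (0:ℝ) T) (Ici T) :=
    Set.disjoint_left.2 fun t h1 h2 => absurd h1.2 (not_lt.2 h2)
  rw [← hunion, lintegral_union measurableSet_Ici hdisj]
  have h1 : ∫⁻ t in Ici T, F t = ∫⁻ t in Ioi T, F t := by
    rw [Measure.restrict_congr_set Ioi_ae_eq_Ici]
  have h2 : ∫⁻ t in Ioi T, F t = 0 := by
    rw [setLIntegral_congr_fun measurableSet_Ioi h0]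
    simp
  rw [h1, h2, add_zero]

/-- Brunn–Minkowski in the plane (additive form). -/
lemma bm2d {A B : Set (ℝ × ℝ)} (hA : IsCompact A) (hB : IsCompact B)
    (hAc : Convex ℝ A) (hBc : Convex ℝ B)
    (hAne : A.Nonempty) (hBne : B.Nonempty) :
    (volume A).toReal + (volume B).toReal
      + 2 * Real.sqrt ((volume A).toReal * (volume B).toReal)
      ≤ (volume (A + B)).toReal := by
  have hC : IsCompact (A + B) := hA.add hB
  set vA := (volume A).toReal with hvAdef
  set vB := (volume B).toReal with hvBdef
  have hvA0 : 0 ≤ vA := ENNReal.toReal_nonneg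
  have hvB0 : 0 ≤ vB := ENNReal.toReal_nonneg
  -- translation bounds
  have htransB : vB ≤ (volume (A + B)).toReal := by
    obtain ⟨a, ha⟩ := hAne
    have hsub : a +ᵥ B ⊆ A + B := by
      rintro _ ⟨b, hb, rfl⟩
      exact ⟨a, ha, b, hb, rfl⟩
    have h2 : volume (a +ᵥ B) ≤ volume (A + B) := measure_mono hsub
    rw [measure_vadd] at h2
    exact ENNReal.toReal_mono hC.measure_lt_top.ne h2
  have htransA : vA ≤ (volume (A + B)).toReal := by
    obtain ⟨b, hb⟩ := hBne
    have hsub : b +ᵥ A ⊆ A + B := by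
      rintro _ ⟨a, ha, rfl⟩
      exact ⟨a, ha, b, hb, add_comm a b⟩
    have h2 : volume (b +ᵥ A) ≤ volume (A + B) := measure_mono hsub
    rw [measure_vadd] at h2
    exact ENNReal.toReal_mono hC.measure_lt_top.ne h2
  rcases eq_or_lt_of_le hvA0 with hvA | hvA
  · have hs : Real.sqrt (vA * vB) = 0 := by rw [← hvA, zero_mul, Real.sqrt_zero]
    rw [hs, ← hvA]
    linarith
  rcases eq_or_lt_of_le hvB0 with hvB | hvB
  · have hs : Real.sqrt (vA * vB) = 0 := by rw [← hvB, mul_zero, Real.sqrt_zero]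
    rw [hs, ← hvB]
    linarith
  -- main case
  obtain ⟨hMf, hbf⟩ := sup_sliceVol_pos hA hvA
  obtain ⟨hMg, hbg⟩ := sup_sliceVol_pos hB hvB
  set Mf := sSup (Set.range (sliceVol A)) with hMfdef
  set Mg := sSup (Set.range (sliceVol B)) with hMgdef
  set T := Mf + Mg with hTdef
  have hT : 0 < T := by positivity
  set lam := Mf / T with hlamdef
  have hlam : 0 < lam := div_pos hMf hT
  have hlam1 : lam < 1 := by
    rw [hlamdef, div_lt_one hT]
    linarith
  have h1lam : 1 - lam = Mg / T := by
    rw [hlamdef, hTdef]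
    field_simp
    ring
  have h1lampos : 0 < 1 - lam := by linarith
  -- step B: pointwise inequality on (0, T)
  have stepB : ∀ t ∈ Ioo (0:ℝ) T,
      volume {x | lam * t ≤ sliceVol A x} + volume {y | (1 - lam) * t ≤ sliceVol B y}
        ≤ volume {z | t ≤ sliceVol (A + B) z} := by
    intro t ht
    have ha : 0 < lam * t := mul_pos hlam ht.1
    have hb : 0 < (1 - lam) * t := mul_pos h1lampos ht.1
    have hSfne : {x | lam * t ≤ sliceVol A x}.Nonempty := by
      have hlt : lam * t < Mf := by
        calc lam * t < lam * T := by exact (mul_lt_mul_iff_right₀ hlam).2 ht.2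
          _ = Mf := by rw [hlamdef]; field_simp
      obtain ⟨_, ⟨x, rfl⟩, hx⟩ := exists_lt_of_lt_csSup (Set.range_nonempty (sliceVol A)) hlt
      exact ⟨x, hx.le⟩
    have hSgne : {y | (1 - lam) * t ≤ sliceVol B y}.Nonempty := by
      have hlt : (1 - lam) * t < Mg := by
        calc (1 - lam) * t < (1 - lam) * T := by exact (mul_lt_mul_iff_right₀ h1lampos).2 ht.2
          _ = Mg := by rw [h1lam]; field_simp
      obtain ⟨_, ⟨y, rfl⟩, hy⟩ := exists_lt_of_lt_csSup (Set.range_nonempty (sliceVol B)) hlt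
      exact ⟨y, hy.le⟩
    have hbf' := level_bounded hA ha
    have hbg' := level_bounded hB hb
    calc volume {x | lam * t ≤ sliceVol A x} + volume {y | (1 - lam) * t ≤ sliceVol B y}
        ≤ volume ({x | lam * t ≤ sliceVol A x} + {y | (1 - lam) * t ≤ sliceVol B y}) :=
          bm1d (level_convex hA hAc ha) (level_convex hB hBc hb) hSfne hSgne
            hbf'.bddBelow hbf'.bddAbove hbg'.bddBelow hbg'.bddAbove
      _ ≤ volume {z | lam * t + (1 - lam) * t ≤ sliceVol (A + B) z} :=
          measure_mono (level_add_subset hA hB hAc hBc ha hb)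
      _ = volume {z | t ≤ sliceVol (A + B) z} := by
          congr 1; ext z; simp only [mem_setOf_eq]
          constructor <;> intro h <;> nlinarith [h]
  -- vanishing beyond T
  have hFzero : ∀ t ∈ Ioi T, volume {x | lam * t ≤ sliceVol A x} = 0 := by
    intro t ht
    have he : {x | lam * t ≤ sliceVol A x} = ∅ := by
      rw [Set.eq_empty_iff_forall_notMem]
      intro x hx
      have h1 : sliceVol A x ≤ Mf := le_csSup hbf ⟨x, rfl⟩
      have h2 : Mf < lam * t := by
        calc Mf = lam * T := by rw [hlamdef]; field_simp
          _ < lam * t := (mul_lt_mul_iff_right₀ hlam).2 ht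
      exact absurd hx (not_le.2 (lt_of_le_of_lt h1 h2))
    rw [he, measure_empty]
  have hGzero : ∀ t ∈ Ioi T, volume {y | (1 - lam) * t ≤ sliceVol B y} = 0 := by
    intro t ht
    have he : {y | (1 - lam) * t ≤ sliceVol B y} = ∅ := by
      rw [Set.eq_empty_iff_forall_notMem]
      intro y hy
      have h1 : sliceVol B y ≤ Mg := le_csSup hbg ⟨y, rfl⟩
      have h2 : Mg < (1 - lam) * t := by
        calc Mg = (1 - lam) * T := by rw [h1lam]; field_simp
          _ < (1 - lam) * t := (mul_lt_mul_iff_right₀ h1lampos).2 ht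
      exact absurd hy (not_le.2 (lt_of_le_of_lt h1 h2))
    rw [he, measure_empty]
  -- step D
  have hFmeas : Measurable fun t : ℝ => volume {x | lam * t ≤ sliceVol A x} :=
    (level_vol_antitone A hlam.le).measurable
  have hHanti : Antitone fun t : ℝ => volume {z | t ≤ sliceVol (A + B) z} :=
    fun a b hab => measure_mono fun z hz => le_trans hab hz
  have stepD : ENNReal.ofReal (1 / lam) * volume A
      + ENNReal.ofReal (1 / (1 - lam)) * volume B ≤ volume (A + B) := by
    rw [← layer_scaled hA hlam, ← layer_scaled hB h1lampos,
      lint_Ioi_eq_Ioo hT hFzero, lint_Ioi_eq_Ioo hT hGzero,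
      ← lintegral_add_left hFmeas]
    calc ∫⁻ t in Ioo (0:ℝ) T,
          (volume {x | lam * t ≤ sliceVol A x} + volume {y | (1 - lam) * t ≤ sliceVol B y})
        ≤ ∫⁻ t in Ioo (0:ℝ) T, volume {z | t ≤ sliceVol (A + B) z} :=
          setLIntegral_mono hHanti.measurable stepB
      _ ≤ ∫⁻ t in Ioi (0:ℝ), volume {z | t ≤ sliceVol (A + B) z} :=
          lintegral_mono_set Ioo_subset_Ioi_self
      _ = volume (A + B) := by
          rw [vol_eq_lintegral_slice hC,
            lintegral_eq_lintegral_meas_le volume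
              (Filter.Eventually.of_forall (sliceVol_nonneg (A + B)))
              (sliceVol_measurable hC).aemeasurable]
  -- step E: convert to reals
  have hE : (1 / lam) * vA + (1 / (1 - lam)) * vB ≤ (volume (A + B)).toReal := by
    have h := ENNReal.toReal_mono hC.measure_lt_top.ne stepD
    rw [ENNReal.toReal_add
        (ENNReal.mul_ne_top ENNReal.ofReal_ne_top hA.measure_lt_top.ne)
        (ENNReal.mul_ne_top ENNReal.ofReal_ne_top hB.measure_lt_top.ne),
      ENNReal.toReal_mul, ENNReal.toReal_mul,
      ENNReal.toReal_ofReal (by positivity), ENNReal.toReal_ofReal (by positivity)] at h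
    exact h
  have hMfne : Mf ≠ 0 := hMf.ne'
  have hMgne : Mg ≠ 0 := hMg.ne'
  have h1 : 1 / lam = 1 + Mg / Mf := by
    rw [hlamdef, hTdef]
    field_simp
  have h2 : 1 / (1 - lam) = 1 + Mf / Mg := by
    rw [h1lam, hTdef]
    field_simp
    ring
  rw [h1, h2] at hE
  have hsq : Real.sqrt (Mg / Mf * vA) * Real.sqrt (Mf / Mg * vB) = Real.sqrt (vA * vB) := by
    rw [← Real.sqrt_mul (by positivity)]
    congr 1
    field_simp
  nlinarith [sq_nonneg (Real.sqrt (Mg / Mf * vA) - Real.sqrt (Mf / Mg * vB)),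
    Real.sq_sqrt (show (0:ℝ) ≤ Mg / Mf * vA by positivity),
    Real.sq_sqrt (show (0:ℝ) ≤ Mf / Mg * vB by positivity), hsq, hE]

open MeasureTheory Pointwise in
/-- Minkowski's first inequality in the plane: for nonempty compact convex `A, B ⊆ ℝ²`,
the mixed area `(Area(A⊞B) - Area A - Area B)/2` is at least `√(Area A · Area B)`. -/
theorem minkowski_first_inequality_plane
    (A B : Set (ℝ × ℝ)) (hA : IsCompact A) (hB : IsCompact B)
    (hAc : Convex ℝ A) (hBc : Convex ℝ B)
    (hAne : A.Nonempty) (hBne : B.Nonempty) :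
    Real.sqrt ((volume A).toReal * (volume B).toReal) ≤
      ((volume (A + B)).toReal - (volume A).toReal - (volume B).toReal) / 2 := by
  have h := bm2d hA hB hAc hBc hAne hBne
  linarith
end
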